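/- Smith's rule optimality: for $n$ jobs with weights $w_i>0$ and lengths $l_i>0$, an ordering $\sigma$ of the jobs minimizes the weighted completion time $\sum_i w_{\sigma(i)} \sum_{k\le i} l_{\sigma(k)}$ if it sorts jobs in nonincreasing order of $w_i/l_i$, and the optimal value equals $\sum_{i\le j} \min(w_i l_j, w_j l_i)$. -/

import Mathlib

/-- Weighted completion time of the ordering `τ` (job in position `i` is `τ i`):
each job's completion time is the sum of lengths of the jobs at positions `≤ i`. -/
noncomputable def weightedCompletionTime {n : ℕ} (w l : Fin n → ℝ) (τ : Equiv.Perm (Fin n)) : ℝ :=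
  ∑ i : Fin n, w (τ i) * ∑ k ∈ Finset.univ.filter (fun k => k ≤ i), l (τ k)

lemma wct_pairs {n : ℕ} (w l : Fin n → ℝ) (τ : Equiv.Perm (Fin n)) :
    weightedCompletionTime w l τ =
      ∑ q : Fin n × Fin n, if τ.symm q.1 ≤ τ.symm q.2 then w q.2 * l q.1 else 0 := by
  calc weightedCompletionTime w l τ
      = ∑ i : Fin n, ∑ k : Fin n, if k ≤ i then w (τ i) * l (τ k) else 0 := by
        unfold weightedCompletionTime
        refine Finset.sum_congr rfl fun i _ => ?_
        rw [Finset.mul_sum, Finset.sum_filter]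
    _ = ∑ q : Fin n × Fin n, if q.1 ≤ q.2 then w (τ q.2) * l (τ q.1) else 0 := by
        rw [Fintype.sum_prod_type_right]
    _ = ∑ q : Fin n × Fin n, if τ.symm q.1 ≤ τ.symm q.2 then w q.2 * l q.1 else 0 :=
        Fintype.sum_equiv (τ.prodCongr τ) _ _ (fun q => by simp)

lemma pairs_fold {n : ℕ} (w l : Fin n → ℝ) (τ : Equiv.Perm (Fin n)) :
    (∑ q : Fin n × Fin n, if τ.symm q.1 ≤ τ.symm q.2 then w q.2 * l q.1 else 0) =
      ∑ q : Fin n × Fin n, if q.1 ≤ q.2 then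
        (if τ.symm q.1 ≤ τ.symm q.2 then w q.2 * l q.1 else w q.1 * l q.2) else 0 := by
  have split : (∑ q : Fin n × Fin n, if τ.symm q.1 ≤ τ.symm q.2 then w q.2 * l q.1 else 0) =
      (∑ q : Fin n × Fin n, if q.1 ≤ q.2 then
          (if τ.symm q.1 ≤ τ.symm q.2 then w q.2 * l q.1 else 0) else 0) +
      (∑ q : Fin n × Fin n, if ¬ q.1 ≤ q.2 then
          (if τ.symm q.1 ≤ τ.symm q.2 then w q.2 * l q.1 else 0) else 0) := by
    rw [← Finset.sum_add_distrib]
    refine Finset.sum_congr rfl fun q _ => ?_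
    split_ifs <;> ring
  have swap : (∑ q : Fin n × Fin n, if ¬ q.1 ≤ q.2 then
          (if τ.symm q.1 ≤ τ.symm q.2 then w q.2 * l q.1 else 0) else 0) =
      ∑ q : Fin n × Fin n, if ¬ q.2 ≤ q.1 then
          (if τ.symm q.2 ≤ τ.symm q.1 then w q.1 * l q.2 else 0) else 0 := by
    exact Fintype.sum_equiv (Equiv.prodComm _ _) _ _ fun q => rfl
  rw [split, swap, ← Finset.sum_add_distrib]
  refine Finset.sum_congr rfl fun q _ => ?_
  by_cases h12 : q.1 ≤ q.2
  · by_cases h21 : q.2 ≤ q.1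
    · have he : q.1 = q.2 := le_antisymm h12 h21
      have hc : τ.symm q.1 ≤ τ.symm q.2 := le_of_eq (by rw [he])
      rw [if_pos h12, if_pos h12, if_pos hc, if_pos hc, if_neg (not_not_intro h21), add_zero]
    · have hne : τ.symm q.1 ≠ τ.symm q.2 := fun hcc => by
        exact absurd (τ.symm.injective hcc) (fun he => h21 (le_of_eq he.symm))
      rw [if_pos h12, if_pos h12, if_pos (show ¬ q.2 ≤ q.1 from h21)]
      rcases le_or_gt (τ.symm q.1) (τ.symm q.2) with hc | hc
      · rw [if_pos hc, if_pos hc, if_neg (fun hc' => hne (le_antisymm hc hc')), add_zero]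
      · rw [if_neg (not_le_of_gt hc), if_neg (not_le_of_gt hc), if_pos hc.le, zero_add]
  · rw [if_neg h12, if_neg h12, if_neg (not_not_intro (le_of_not_ge h12)), add_zero]

lemma target_pairs {n : ℕ} (w l : Fin n → ℝ) :
    (∑ i : Fin n, ∑ j ∈ Finset.univ.filter (fun j => i ≤ j), min (w i * l j) (w j * l i)) =
      ∑ q : Fin n × Fin n, if q.1 ≤ q.2 then min (w q.1 * l q.2) (w q.2 * l q.1) else 0 := by
  rw [Fintype.sum_prod_type]
  exact Finset.sum_congr rfl fun i _ => by rw [Finset.sum_filter]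

/-- Smith's rule: an ordering sorting jobs in nonincreasing order of `w i / l i`
minimizes the weighted completion time, and the optimal value equals
`∑_{i ≤ j} min (w i * l j) (w j * l i)`. -/
theorem smiths_rule_optimal {n : ℕ} (w l : Fin n → ℝ)
    (hw : ∀ i, 0 < w i) (hl : ∀ i, 0 < l i)
    (σ : Equiv.Perm (Fin n))
    (hsorted : ∀ i j : Fin n, i ≤ j → w (σ j) * l (σ i) ≤ w (σ i) * l (σ j)) :
    (∀ τ : Equiv.Perm (Fin n),
      weightedCompletionTime w l σ ≤ weightedCompletionTime w l τ) ∧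
    weightedCompletionTime w l σ =
      ∑ i : Fin n, ∑ j ∈ Finset.univ.filter (fun j => i ≤ j), min (w i * l j) (w j * l i) := by
  have heq : weightedCompletionTime w l σ =
      ∑ i : Fin n, ∑ j ∈ Finset.univ.filter (fun j => i ≤ j), min (w i * l j) (w j * l i) := by
    rw [wct_pairs, pairs_fold, target_pairs]
    refine Finset.sum_congr rfl fun q _ => ?_
    by_cases h12 : q.1 ≤ q.2
    · rw [if_pos h12, if_pos h12]
      rcases le_or_gt (σ.symm q.1) (σ.symm q.2) with hc | hc
      · rw [if_pos hc]
        have := hsorted _ _ hc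
        simp only [Equiv.apply_symm_apply] at this
        exact (min_eq_right this).symm
      · rw [if_neg (not_le_of_gt hc)]
        have := hsorted _ _ hc.le
        simp only [Equiv.apply_symm_apply] at this
        exact (min_eq_left this).symm
    · rw [if_neg h12, if_neg h12]
  refine ⟨fun τ => ?_, heq⟩
  rw [heq, target_pairs, wct_pairs, pairs_fold]
  refine Finset.sum_le_sum fun q _ => ?_
  split_ifs with h1 h2
  · exact min_le_right _ _
  · exact min_le_left _ _
  · exact le_refl _
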